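/- Let Σ = {a,b} be a two-letter alphabet and 𝕄 = 𝕄^sum. Define the quantitative timed language 𝕃 : 𝕋Σ⁺ → ℝ ∪ {∞} by 𝕃((a₁,t₁)…(aₙ,tₙ)) = t₁ if a₁ = a and 𝕃((a₁,t₁)…(aₙ,tₙ)) = 2·t₁ if a₁ = b. Then 𝕃 ∈ Rec(Σ,𝕄^sum) but 𝕃 ∉ H^Seq(Σ,𝕄^sum). -/

import Mathlib

open scoped NNReal Classical

/-! # Core definitions: timed automata and weighted timed automata -/

/-- Comparison operators ⋈ ∈ {<, ≤, =, ≥, >}. -/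
inductive Cmp : Type
  | lt | le | eq | ge | gt
  deriving DecidableEq

/-- Evaluation of a comparison `r ⋈ c` for `r ∈ ℝ≥0` and `c ∈ ℕ`. -/
def Cmp.eval : Cmp → ℝ≥0 → ℕ → Prop
  | .lt, r, c => r < (c : ℝ≥0)
  | .le, r, c => r ≤ (c : ℝ≥0)
  | .eq, r, c => r = (c : ℝ≥0)
  | .ge, r, c => (c : ℝ≥0) ≤ r
  | .gt, r, c => (c : ℝ≥0) < r

/-- Clock constraints over a set `C` of clocks: `True` or conjunctions of `x ⋈ c`. -/
inductive ClockConstraint (C : Type) : Type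
  | tt : ClockConstraint C
  | atom : C → Cmp → ℕ → ClockConstraint C
  | conj : ClockConstraint C → ClockConstraint C → ClockConstraint C

/-- A clock valuation assigns a non-negative real to each clock. -/
def ClockVal (C : Type) : Type := C → ℝ≥0

/-- Satisfaction of clock constraints. -/
def ClockConstraint.Sat {C : Type} (ν : ClockVal C) : ClockConstraint C → Prop
  | .tt => True
  | .atom x op c => op.eval (ν x) c
  | .conj φ ψ => φ.Sat ν ∧ ψ.Sat ν

/-- `ν + t`: add `t` to every clock. -/
def ClockVal.add {C : Type} (ν : ClockVal C) (t : ℝ≥0) : ClockVal C := fun x => ν x + t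

/-- `ν[Λ := 0]`: reset the clocks in `Λ` to `0`. -/
noncomputable def ClockVal.reset {C : Type} (ν : ClockVal C) (Λ : Set C) : ClockVal C :=
  fun x => if x ∈ Λ then 0 else ν x

/-- The clock valuation assigning `0` to every clock. -/
def ClockVal.zero {C : Type} : ClockVal C := fun _ => 0

/-- An edge of a timed automaton: an element of `L × Σ × Φ(C) × 2^C × L`. -/
structure Edge (L A C : Type) : Type where
  src : L
  label : A
  guard : ClockConstraint C
  reset : Set C
  dst : L

/-- A timed automaton over the alphabet `A`. -/
structure TimedAutomaton (A : Type) : Type 1 where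
  L : Type
  C : Type
  finL : Finite L
  finC : Finite C
  I : Set L
  F : Set L
  E : Set (Edge L A C)
  finE : E.Finite

/-- A (non-empty finite) timed word over `A`. -/
abbrev TimedWord (A : Type) : Type := { w : List (A × ℝ≥0) // w ≠ [] }

/-- `T.IsRunFrom ℓ ν w es` holds iff `es` is the sequence of edges of a run of `T`
reading the timed word `w`, starting in location `ℓ` with clock valuation `ν`,
and ending in a final location. -/
def TimedAutomaton.IsRunFrom {A : Type} (T : TimedAutomaton A) :
    T.L → ClockVal T.C → List (A × ℝ≥0) → List (Edge T.L A T.C) → Prop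
  | ℓ, _, [], [] => ℓ ∈ T.F
  | ℓ, ν, (a, t) :: w, e :: es =>
      e ∈ T.E ∧ e.src = ℓ ∧ e.label = a ∧ e.guard.Sat (ν.add t) ∧
      T.IsRunFrom e.dst ((ν.add t).reset e.reset) w es
  | _, _, [], _ :: _ => False
  | _, _, _ :: _, [] => False

/-- `Run_T(w)`: the set of runs (identified with their edge sequences) of `T` on `w`. -/
def TimedAutomaton.RunOn {A : Type} (T : TimedAutomaton A) (w : TimedWord A) :
    Set (List (Edge T.L A T.C)) :=
  { es | ∃ ℓ₀ ∈ T.I, T.IsRunFrom ℓ₀ ClockVal.zero w.1 es }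

/-- `L(T)`: the timed language accepted by `T`. -/
def TimedAutomaton.Lang {A : Type} (T : TimedAutomaton A) : Set (TimedWord A) :=
  { w | (T.RunOn w).Nonempty }

/-- A timed automaton is unambiguous if every timed word has at most one run. -/
def TimedAutomaton.Unambiguous {A : Type} (T : TimedAutomaton A) : Prop :=
  ∀ w : TimedWord A, (T.RunOn w).Subsingleton

/-- A timed automaton is deterministic if it has a single initial location and the guards of
any two distinct edges with the same source and label are jointly unsatisfiable. -/
def TimedAutomaton.Deterministic {A : Type} (T : TimedAutomaton A) : Prop :=
  (∃ ℓ, T.I = {ℓ}) ∧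
  ∀ e₁ ∈ T.E, ∀ e₂ ∈ T.E, e₁.src = e₂.src → e₁.label = e₂.label → e₁ ≠ e₂ →
    ∀ ν : ClockVal T.C, ¬ (e₁.guard.Sat ν ∧ e₂.guard.Sat ν)

/-- A timed automaton is sequential if it has a single initial location and any two edges
with the same source and label are equal. -/
def TimedAutomaton.Sequential {A : Type} (T : TimedAutomaton A) : Prop :=
  (∃ ℓ, T.I = {ℓ}) ∧
  ∀ e₁ ∈ T.E, ∀ e₂ ∈ T.E, e₁.src = e₂.src → e₁.label = e₂.label → e₁ = e₂

/-- A timed language is recognizable by a timed automaton satisfying `P`. -/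
def TLRecognizableBy {A : Type} (P : TimedAutomaton A → Prop) (𝓛 : Set (TimedWord A)) : Prop :=
  ∃ T : TimedAutomaton A, P T ∧ T.Lang = 𝓛

/-- A weighted timed automaton over the alphabet `A` and (the domain `M` of) a timed
valuation monoid: a timed automaton together with weights on locations and edges.
The timed valuation monoid itself is given by an `AddCommMonoid M` instance together with a
timed valuation function `val : List ((M × M) × ℝ≥0) → M` (only its values on non-empty
lists, i.e. on `𝕋(M×M)⁺`, ever matter). -/
structure WTA (A M : Type) extends TimedAutomaton A where
  wtL : L → M
  wtE : Edge L A C → M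

/-- The timed word `wt♯(ρ) ∈ 𝕋(M×M)⁺` associated with a run: the `i`-th letter is
`((wt(ℓ_{i-1}), wt(e_i)), t_i)`, where `ℓ_{i-1}` is the source location of edge `e_i`. -/
def WTA.runWord {A M : Type} (W : WTA A M) (w : List (A × ℝ≥0))
    (es : List (Edge W.L A W.C)) : List ((M × M) × ℝ≥0) :=
  List.zipWith (fun (p : A × ℝ≥0) e => ((W.wtL e.src, W.wtE e), p.2)) w es

/-- The behavior `‖W‖ : 𝕋A⁺ → M` of a WTA: `‖W‖(w) = Σ (val(wt♯(ρ)) : ρ ∈ Run_W(w))`,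
the empty sum being `0` (the monoid unit `𝟘`). -/
noncomputable def WTA.behavior {A M : Type} [AddCommMonoid M]
    (val : List ((M × M) × ℝ≥0) → M) (W : WTA A M) (w : TimedWord A) : M :=
  ∑ᶠ es ∈ W.toTimedAutomaton.RunOn w, val (W.runWord w.1 es)

/-- A quantitative timed language `r : 𝕋A⁺ → M` is recognizable over the timed valuation
monoid `(M, +, val, 𝟘)` by a WTA whose underlying timed automaton satisfies `P`. -/
def QTLRecognizableBy {A M : Type} [AddCommMonoid M] (val : List ((M × M) × ℝ≥0) → M)
    (P : TimedAutomaton A → Prop) (r : TimedWord A → M) : Prop :=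
  ∃ W : WTA A M, P W.toTimedAutomaton ∧ ∀ w, W.behavior val w = r w

/-- Recognizability (no restriction on the underlying timed automaton). -/
def QTLRecognizable {A M : Type} [AddCommMonoid M] (val : List ((M × M) × ℝ≥0) → M)
    (r : TimedWord A → M) : Prop :=
  ∃ W : WTA A M, ∀ w, W.behavior val w = r w

/-- Renaming of timed words along `h : Γ → A`. -/
def mapTimedWord {Γ A : Type} (h : Γ → A) (v : TimedWord Γ) : TimedWord A :=
  ⟨v.1.map (fun p => (h p.1, p.2)), by
    cases v with
    | mk l hl => cases l with
      | nil => exact absurd rfl hl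
      | cons p l => simp⟩

/-- `h(r)(w) = Σ (r(v) : v ∈ 𝕋Γ⁺, h(v) = w)` (a finite sum when `Γ` is finite). -/
noncomputable def pushQTL {Γ A M : Type} [AddCommMonoid M] (h : Γ → A)
    (r : TimedWord Γ → M) (w : TimedWord A) : M :=
  ∑ᶠ v ∈ { v : TimedWord Γ | mapTimedWord h v = w }, r v

/-- `(val ∘ g)(w) = val((g(a₁),t₁)…(g(aₙ),tₙ))`. -/
def valComp {A M : Type} (val : List ((M × M) × ℝ≥0) → M) (g : A → M × M)
    (w : TimedWord A) : M :=
  val (w.1.map (fun p => (g p.1, p.2)))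

/-- The intersection `r ∩ 𝓛` of a quantitative timed language with a timed language. -/
noncomputable def interQTL {A M : Type} [Zero M] (r : TimedWord A → M)
    (𝓛 : Set (TimedWord A)) (w : TimedWord A) : M :=
  if w ∈ 𝓛 then r w else 0

/-- Membership in the Nivat class `N^P(A, 𝕄)`: `𝕃 = h((val ∘ g) ∩ 𝓛)` for some alphabet `Γ`,
maps `h : Γ → A`, `g : Γ → M × M` and a timed language `𝓛` recognizable by a timed
automaton satisfying `P`. -/
def NivatMem {A M : Type} [AddCommMonoid M] (val : List ((M × M) × ℝ≥0) → M)
    (P : ∀ {Γ : Type}, TimedAutomaton Γ → Prop) (𝕃 : TimedWord A → M) : Prop :=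
  ∃ (Γ : Type) (_ : Finite Γ) (_ : Nonempty Γ) (h : Γ → A) (g : Γ → M × M)
    (𝓛 : Set (TimedWord Γ)),
      TLRecognizableBy P 𝓛 ∧ ∀ w, 𝕃 w = pushQTL h (interQTL (valComp val g) 𝓛) w

/-- Membership in the class `H^P(A, 𝕄)`: `𝕃 = h(r)` for some alphabet `Γ`, `h : Γ → A`
and a quantitative timed language `r` recognizable by a WTA whose underlying timed
automaton satisfies `P`. -/
def HMem {A M : Type} [AddCommMonoid M] (val : List ((M × M) × ℝ≥0) → M)
    (P : ∀ {Γ : Type}, TimedAutomaton Γ → Prop) (𝕃 : TimedWord A → M) : Prop :=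
  ∃ (Γ : Type) (_ : Finite Γ) (_ : Nonempty Γ) (h : Γ → A) (r : TimedWord Γ → M),
      QTLRecognizableBy val (fun T => P T) r ∧ ∀ w, 𝕃 w = pushQTL h r w

/-- Idempotency of a timed valuation monoid. -/
def IsIdempotent (M : Type) [Add M] : Prop := ∀ m : M, m + m = m

/-- Location-independence of a timed valuation function: the value of `val` on a non-empty
timed word over `M × M` depends only on the second components and the time stamps. -/
def LocIndep {M : Type} (val : List ((M × M) × ℝ≥0) → M) : Prop :=
  ∀ l l' : List ((M × M) × ℝ≥0), l ≠ [] →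
    l.map (fun p => (p.1.2, p.2)) = l'.map (fun p => (p.1.2, p.2)) → val l = val l'
/-! # The timed valuation monoid 𝕄^sum = (ℝ ∪ {∞}, min, val^sum, ∞) -/

/-- The domain `ℝ ∪ {∞}` of `𝕄^sum`, equipped with `+ = min` and `𝟘 = ∞` via the
tropical `AddCommMonoid` structure on `Tropical (WithTop ℝ)`. -/
abbrev MSum : Type := Tropical (WithTop ℝ)

/-- Multiplication `m · t` of `m ∈ ℝ ∪ {∞}` by a time `t ∈ ℝ≥0`, with the convention
`∞ · t = ∞` (for every `t`, including `t = 0`). -/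
noncomputable def mulTime (m : WithTop ℝ) (t : ℝ≥0) : WithTop ℝ :=
  WithTop.map (fun r => r * (t : ℝ)) m

/-- `val^sum(((m₁,m₁'),t₁)…((mₙ,mₙ'),tₙ)) = Σᵢ (mᵢ·tᵢ + mᵢ')`, computed in `ℝ ∪ {∞}`
with `∞` absorbing for `+` and `·`. -/
noncomputable def valSum : List ((MSum × MSum) × ℝ≥0) → MSum := fun l =>
  Tropical.trop ((l.map (fun p => mulTime p.1.1.untrop p.2 + p.1.2.untrop)).sum)

/-- The quantitative timed language over `Σ = {a,b}` (modelled as `Bool`, `a = true`,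
`b = false`) and `𝕄^sum` given by `𝕃((a₁,t₁)…(aₙ,tₙ)) = t₁` if `a₁ = a` and `= 2·t₁`
if `a₁ = b`. -/
noncomputable def Lfirst : TimedWord Bool → MSum := fun w =>
  Tropical.trop
    ((if (w.1.head w.2).1 = true then (((w.1.head w.2).2 : ℝ) : WithTop ℝ)
      else ((2 * ((w.1.head w.2).2 : ℝ) : ℝ) : WithTop ℝ)))

/-! # Auxiliary material for the proof -/

open Tropical

/-- A one-letter timed word. -/
def oneWord {A : Type} (a : A) (t : ℝ≥0) : TimedWord A := ⟨[(a, t)], List.cons_ne_nil _ _⟩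

/-! ## Part 1: a WTA recognizing `Lfirst` -/

def myEdge1 (x : Bool) : Edge (Option Bool) Bool Empty := ⟨some x, x, .tt, ∅, none⟩
def myEdge2 (x : Bool) : Edge (Option Bool) Bool Empty := ⟨none, x, .tt, ∅, none⟩

def myTA : TimedAutomaton Bool where
  L := Option Bool
  C := Empty
  finL := inferInstance
  finC := inferInstance
  I := {some true, some false}
  F := {none}
  E := {myEdge1 true, myEdge1 false, myEdge2 true, myEdge2 false}
  finE := (Set.finite_singleton _).insert _ |>.insert _ |>.insert _

noncomputable def myWtL : Option Bool → MSum
  | some true => Tropical.trop (1 : WithTop ℝ)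
  | some false => Tropical.trop (2 : WithTop ℝ)
  | none => Tropical.trop (0 : WithTop ℝ)

noncomputable def myW : WTA Bool MSum where
  toTimedAutomaton := myTA
  wtL := myWtL
  wtE := fun _ => Tropical.trop (0 : WithTop ℝ)

def midEdges (l : List (Bool × ℝ≥0)) : List (Edge (Option Bool) Bool Empty) :=
  l.map (fun p => myEdge2 p.1)

lemma run_mid : ∀ (l : List (Bool × ℝ≥0)) (ν : ClockVal Empty),
    myTA.IsRunFrom none ν l (midEdges l)
  | [], _ => by show (none : Option Bool) ∈ myTA.F; simp [myTA]; exact rfl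
  | (x, t) :: l, ν => by
      refine ⟨?_, rfl, rfl, trivial, run_mid l _⟩
      cases x
      · exact Or.inr (Or.inr (Or.inr rfl))
      · exact Or.inr (Or.inr (Or.inl rfl))

lemma run_mid_unique : ∀ (l : List (Bool × ℝ≥0)) (ν : ClockVal Empty)
    (es : List (Edge (Option Bool) Bool Empty)),
    myTA.IsRunFrom none ν l es → es = midEdges l
  | [], _, [], _ => rfl
  | [], _, _ :: _, hr => absurd hr (by simp [TimedAutomaton.IsRunFrom])
  | _ :: _, _, [], hr => absurd hr (by simp [TimedAutomaton.IsRunFrom])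
  | (x, t) :: l, ν, e :: es, hr => by
      obtain ⟨hE, hsrc, hlab, _, hrest⟩ := hr
      have he : e = myEdge2 x := by
        simp only [myTA, Set.mem_insert_iff, Set.mem_singleton_iff] at hE
        rcases hE with rfl | rfl | rfl | rfl
        · exact absurd hsrc (by simp [myEdge1])
        · exact absurd hsrc (by simp [myEdge1])
        · simp only [myEdge2] at hlab; subst hlab; rfl
        · simp only [myEdge2] at hlab; subst hlab; rfl
      subst he
      have := run_mid_unique l _ es hrest
      simp [midEdges, this]

lemma myRunOn (x : Bool) (t : ℝ≥0) (rest : List (Bool × ℝ≥0))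
    (hw : ((x, t) :: rest : List (Bool × ℝ≥0)) ≠ []) :
    myTA.RunOn ⟨(x, t) :: rest, hw⟩ = {myEdge1 x :: midEdges rest} := by
  ext es
  simp only [TimedAutomaton.RunOn, Set.mem_setOf_eq, Set.mem_singleton_iff]
  constructor
  · rintro ⟨ℓ0, hℓ0, hrun⟩
    match es, hrun with
    | [], hrun => exact hrun.elim
    | e :: es, hrun =>
      obtain ⟨hE, hsrc, hlab, _, hrest⟩ := hrun
      have hI : ℓ0 = some true ∨ ℓ0 = some false := by
        exact hℓ0
      have he : e = myEdge1 x := by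
        simp only [myTA, Set.mem_insert_iff, Set.mem_singleton_iff] at hE
        rcases hE with rfl | rfl | rfl | rfl
        · simp only [myEdge1] at hlab; subst hlab; rfl
        · simp only [myEdge1] at hlab; subst hlab; rfl
        · rcases hI with h | h <;> rw [h] at hsrc <;> exact absurd hsrc (by simp [myEdge2])
        · rcases hI with h | h <;> rw [h] at hsrc <;> exact absurd hsrc (by simp [myEdge2])
      subst he
      rw [run_mid_unique rest _ es hrest]
      exact rfl
  · rintro rfl
    refine ⟨some x, ?_, ?_, rfl, rfl, trivial, run_mid rest _⟩
    · cases x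
      · exact Or.inr rfl
      · exact Or.inl rfl
    · cases x
      · exact Or.inr (Or.inl rfl)
      · exact Or.inl rfl

lemma zipWith_map_self {α β γ : Type} (f : α → β → γ) (g : α → β) :
    ∀ l : List α, List.zipWith f l (l.map g) = l.map (fun a => f a (g a))
  | [] => rfl
  | a :: l => by simp [List.zipWith, zipWith_map_self f g l]

lemma myW_behavior : ∀ w, myW.behavior valSum w = Lfirst w := by
  rintro ⟨l, hl⟩
  match l, hl with
  | (x, t) :: rest, hl =>
    have hrun : myW.toTimedAutomaton.RunOn ⟨(x, t) :: rest, hl⟩ = {myEdge1 x :: midEdges rest} :=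
      myRunOn x t rest hl
    unfold WTA.behavior
    rw [hrun]; erw [finsum_mem_singleton]
    have hword : myW.runWord ((x, t) :: rest) (myEdge1 x :: midEdges rest) =
        ((myWtL (some x), Tropical.trop (0 : WithTop ℝ)), t) ::
          rest.map (fun p =>
            ((Tropical.trop (0 : WithTop ℝ), Tropical.trop (0 : WithTop ℝ)), p.2)) := by
      simp only [WTA.runWord, midEdges, List.zipWith_cons_cons, zipWith_map_self]
      exact congrArg (List.cons _) (zipWith_map_self _ _ rest)
    erw [hword]
    have hsum0 : ((rest.map (fun p =>
        ((Tropical.trop (0 : WithTop ℝ), Tropical.trop (0 : WithTop ℝ)), p.2))).map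
          (fun p => mulTime p.1.1.untrop p.2 + p.1.2.untrop)).sum = 0 := by
      apply List.sum_eq_zero
      intro z hz
      simp only [List.map_map, List.mem_map, Function.comp] at hz
      obtain ⟨p, _, rfl⟩ := hz
      show mulTime (Tropical.untrop (Tropical.trop (0 : WithTop ℝ))) p.2 +
        Tropical.untrop (Tropical.trop (0 : WithTop ℝ)) = 0
      rw [Tropical.untrop_trop, show ((0 : WithTop ℝ)) = (((0 : ℝ)) : WithTop ℝ) from rfl,
        mulTime, WithTop.map_coe]
      norm_num
    simp only [valSum, List.map_cons, List.sum_cons, hsum0, add_zero, Tropical.untrop_trop]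
    unfold Lfirst
    simp only [List.head_cons]
    cases x <;> simp [myWtL, mulTime, ← WithTop.coe_one, ← WithTop.coe_ofNat,
      WithTop.map_coe, ← WithTop.coe_zero]

/-! ## Part 2: auxiliary lemmas for non-membership -/

def maxConst {C : Type} : ClockConstraint C → ℕ
  | .tt => 0
  | .atom _ _ c => c
  | .conj φ ψ => max (maxConst φ) (maxConst ψ)

lemma sat_stable {C : Type} (φ : ClockConstraint C) {t t' : ℝ≥0}
    (ht : (maxConst φ : ℝ≥0) < t) (ht' : (maxConst φ : ℝ≥0) < t') :
    φ.Sat (ClockVal.zero.add t) ↔ φ.Sat (ClockVal.zero.add t') := by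
  induction φ with
  | tt => exact Iff.rfl
  | atom x op c =>
      simp only [maxConst] at ht ht'
      show op.eval (ClockVal.zero x + t) c ↔ op.eval (ClockVal.zero x + t') c
      have hz : ClockVal.zero x = 0 := rfl
      rw [hz, zero_add, zero_add]
      cases op with
      | lt => exact iff_of_false (lt_asymm ht) (lt_asymm ht')
      | le => exact iff_of_false (not_le.mpr ht) (not_le.mpr ht')
      | eq => exact iff_of_false (ne_of_gt ht) (ne_of_gt ht')
      | ge => exact iff_of_true ht.le ht'.le
      | gt => exact iff_of_true ht ht'
  | conj φ ψ ihφ ihψ =>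
      simp only [maxConst, Nat.cast_max, max_lt_iff] at ht ht'
      exact and_congr (ihφ ht.1 ht'.1) (ihψ ht.2 ht'.2)

/-- Eligible edges for a one-letter run. -/
def elig {Γ : Type} (T : TimedAutomaton Γ) (ℓ0 : T.L) (γ : Γ) (t : ℝ≥0) :
    Set (Edge T.L Γ T.C) :=
  {e | e ∈ T.E ∧ e.src = ℓ0 ∧ e.label = γ ∧ e.guard.Sat (ClockVal.zero.add t) ∧ e.dst ∈ T.F}

lemma elig_stable {Γ : Type} (T : TimedAutomaton Γ) (ℓ0 : T.L) (γ : Γ) {t t' : ℝ≥0}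
    (ht : ∀ e ∈ T.E, (maxConst e.guard : ℝ≥0) < t)
    (ht' : ∀ e ∈ T.E, (maxConst e.guard : ℝ≥0) < t') :
    elig T ℓ0 γ t = elig T ℓ0 γ t' := by
  ext e
  simp only [elig, Set.mem_setOf_eq]
  constructor
  · rintro ⟨hE, h1, h2, h3, h4⟩
    exact ⟨hE, h1, h2, (sat_stable e.guard (ht e hE) (ht' e hE)).mp h3, h4⟩
  · rintro ⟨hE, h1, h2, h3, h4⟩
    exact ⟨hE, h1, h2, (sat_stable e.guard (ht' e hE) (ht e hE)).mp h3, h4⟩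

lemma runOn_single {Γ : Type} (T : TimedAutomaton Γ) (ℓ0 : T.L) (hI : T.I = {ℓ0})
    (γ : Γ) (t : ℝ≥0) :
    T.RunOn (oneWord γ t) = (fun e => [e]) '' elig T ℓ0 γ t := by
  ext es
  simp only [TimedAutomaton.RunOn, hI, Set.mem_setOf_eq, Set.mem_singleton_iff,
    Set.mem_image, oneWord]
  constructor
  · rintro ⟨ℓ, rfl, hrun⟩
    match es, hrun with
    | [], hrun => exact hrun.elim
    | e :: es, hrun =>
      obtain ⟨hE, hsrc, hlab, hsat, hrest⟩ := hrun
      match es, hrest with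
      | [], hF => exact ⟨e, ⟨hE, hsrc, hlab, hsat, hF⟩, rfl⟩
      | _ :: _, hrest => exact hrest.elim
  · rintro ⟨e, ⟨hE, hsrc, hlab, hsat, hF⟩, rfl⟩
    exact ⟨ℓ0, rfl, hE, hsrc, hlab, hsat, hF⟩

lemma behavior_single_empty {Γ : Type} (W : WTA Γ MSum) (ℓ0 : W.L) (hI : W.I = {ℓ0})
    (γ : Γ) (t : ℝ≥0) (h : elig W.toTimedAutomaton ℓ0 γ t = ∅) :
    W.behavior valSum (oneWord γ t) = 0 := by
  unfold WTA.behavior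
  rw [runOn_single W.toTimedAutomaton ℓ0 hI γ t, h]
  simp

lemma behavior_single_mem {Γ : Type} (W : WTA Γ MSum) (ℓ0 : W.L) (hI : W.I = {ℓ0})
    (hseq2 : ∀ e₁ ∈ W.E, ∀ e₂ ∈ W.E, e₁.src = e₂.src → e₁.label = e₂.label → e₁ = e₂)
    (γ : Γ) (t : ℝ≥0) (e : Edge W.L Γ W.C) (he : e ∈ elig W.toTimedAutomaton ℓ0 γ t) :
    W.behavior valSum (oneWord γ t) =
      Tropical.trop (mulTime (W.wtL ℓ0).untrop t + (W.wtE e).untrop) := by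
  have hsub : (elig W.toTimedAutomaton ℓ0 γ t).Subsingleton := by
    intro e₁ h₁ e₂ h₂
    exact hseq2 e₁ h₁.1 e₂ h₂.1 (h₁.2.1.trans h₂.2.1.symm) (h₁.2.2.1.trans h₂.2.2.1.symm)
  unfold WTA.behavior
  rw [runOn_single W.toTimedAutomaton ℓ0 hI γ t, hsub.eq_singleton_of_mem he,
    Set.image_singleton, finsum_mem_singleton]
  have hw : W.runWord (oneWord γ t).1 [e] = [((W.wtL e.src, W.wtE e), t)] := rfl
  rw [hw, he.2.1]
  simp [valSum]

lemma finset_inf_add {ι : Type} (s : Finset ι) (a : WithTop ℝ) (f : ι → WithTop ℝ) :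
    s.inf (fun i => a + f i) = a + s.inf f := by
  induction s using Finset.cons_induction with
  | empty => simp
  | cons b s hb ih =>
      rw [Finset.inf_cons, Finset.inf_cons, ih]
      exact min_add_add_left a (f b) (s.inf f)

lemma Lfirst_oneWord_true (t : ℝ≥0) :
    (Lfirst (oneWord true t)).untrop = (((t : ℝ)) : WithTop ℝ) := by
  simp [Lfirst, oneWord]

lemma Lfirst_oneWord_false (t : ℝ≥0) :
    (Lfirst (oneWord false t)).untrop = (((2 * (t : ℝ) : ℝ)) : WithTop ℝ) := by
  simp [Lfirst, oneWord]

/-- The quantitative timed language `𝕃` above satisfies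
`𝕃 ∈ Rec(Σ,𝕄^sum)` but `𝕃 ∉ H^Seq(Σ,𝕄^sum)`. -/
theorem Lfirst_recognizable_not_hmem_seq :
    QTLRecognizable valSum Lfirst ∧
    ¬ HMem valSum (fun {_} T => T.Sequential) Lfirst := by
  constructor
  · exact ⟨myW, myW_behavior⟩
  · rintro ⟨Γ, hfinΓ, hneΓ, h, r, ⟨W, hseq, hbeh⟩, heq⟩
    haveI := hfinΓ
    obtain ⟨ℓ0, hI⟩ := hseq.1
    -- a bound on all constants in guards
    set K : ℕ := (W.finE.toFinset.image (fun e => maxConst e.guard)).sup id with hKdef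
    have hK : ∀ e ∈ W.E, (maxConst e.guard : ℝ≥0) ≤ (K : ℝ≥0) := by
      intro e he
      have : maxConst e.guard ≤ K :=
        Finset.le_sup (f := id) (Finset.mem_image_of_mem _ (W.finE.mem_toFinset.mpr he))
      exact_mod_cast this
    have hbound : ∀ t : ℝ≥0, (K : ℝ≥0) < t → ∀ e ∈ W.E, (maxConst e.guard : ℝ≥0) < t :=
      fun t ht e he => lt_of_le_of_lt (hK e he) ht
    set t₁ : ℝ≥0 := (K : ℝ≥0) + 1 with ht₁def
    set t₂ : ℝ≥0 := (K : ℝ≥0) + 2 with ht₂def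
    have ht₁ : (K : ℝ≥0) < t₁ := lt_add_of_pos_right _ one_pos
    have ht₂ : (K : ℝ≥0) < t₂ := lt_add_of_pos_right _ two_pos
    set m : WithTop ℝ := (W.wtL ℓ0).untrop with hmdef
    classical
    set c : Γ → WithTop ℝ := fun γ =>
      if hne : (elig W.toTimedAutomaton ℓ0 γ t₁).Nonempty then (W.wtE hne.choose).untrop
      else ⊤ with hcdef
    have hterm : ∀ (γ : Γ) (t : ℝ≥0), (K : ℝ≥0) < t →
        (W.behavior valSum (oneWord γ t)).untrop = mulTime m t + c γ := by
      intro γ t ht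
      have hstab : elig W.toTimedAutomaton ℓ0 γ t = elig W.toTimedAutomaton ℓ0 γ t₁ :=
        elig_stable _ _ _ (hbound t ht) (hbound t₁ ht₁)
      by_cases hne : (elig W.toTimedAutomaton ℓ0 γ t₁).Nonempty
      · have he : hne.choose ∈ elig W.toTimedAutomaton ℓ0 γ t := by
          rw [hstab]; exact hne.choose_spec
        rw [behavior_single_mem W ℓ0 hI hseq.2 γ t _ he, Tropical.untrop_trop]
        rw [hcdef]
        simp only
        rw [dif_pos hne]
      · have hemp : elig W.toTimedAutomaton ℓ0 γ t = ∅ := by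
          rw [hstab]; exact Set.not_nonempty_iff_eq_empty.mp hne
        rw [behavior_single_empty W ℓ0 hI γ t hemp, Tropical.untrop_zero]
        rw [hcdef]
        simp only
        rw [dif_neg hne, add_top]
    -- computing the pushforward on one-letter words
    have hpush : ∀ (x : Bool) (t : ℝ≥0), (K : ℝ≥0) < t →
        (Lfirst (oneWord x t)).untrop =
          mulTime m t + (Set.toFinite {γ : Γ | h γ = x}).toFinset.inf c := by
      intro x t ht
      have hset : {v : TimedWord Γ | mapTimedWord h v = oneWord x t} =
          (fun γ : Γ => oneWord γ t) '' {γ : Γ | h γ = x} := by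
        ext v
        simp only [Set.mem_setOf_eq, Set.mem_image]
        constructor
        · intro hv
          obtain ⟨l, hl⟩ := v
          match l, hl with
          | p :: l', hl =>
            have hv' := congrArg Subtype.val hv
            simp only [mapTimedWord, List.map_cons, oneWord] at hv'
            rw [List.cons_eq_cons] at hv'
            obtain ⟨hp, hl'⟩ := hv'
            have hl'' : l' = [] := List.map_eq_nil_iff.mp hl'
            subst hl''
            refine ⟨p.1, congrArg Prod.fst hp, ?_⟩
            apply Subtype.ext
            show [(p.1, t)] = [p]
            have hp2 : p.2 = t := congrArg Prod.snd hp
            rw [← hp2]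
        · rintro ⟨γ, hγ, rfl⟩
          apply Subtype.ext
          simp [mapTimedWord, oneWord, hγ]
      have hinj : Set.InjOn (fun γ : Γ => oneWord γ t) {γ : Γ | h γ = x} := by
        intro γ₁ _ γ₂ _ hg
        have := congrArg (fun v : TimedWord Γ => (v.1.head v.2).1) hg
        simpa [oneWord] using this
      rw [heq (oneWord x t)]
      unfold pushQTL
      rw [hset, finsum_mem_image hinj]
      rw [finsum_mem_congr rfl (fun γ _ => (hbeh (oneWord γ t)).symm)]
      conv_lhs => rw [← Set.Finite.coe_toFinset (Set.toFinite {γ : Γ | h γ = x})]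
      rw [finsum_mem_coe_finset]
      rw [Finset.untrop_sum']
      refine (Finset.inf_congr rfl (fun γ _ => hterm γ t ht)).trans ?_
      rw [finset_inf_add]
    have e1 := hpush true t₁ ht₁
    have e2 := hpush true t₂ ht₂
    have e3 := hpush false t₁ ht₁
    have e4 := hpush false t₂ ht₂
    rw [Lfirst_oneWord_true] at e1 e2
    rw [Lfirst_oneWord_false] at e3 e4
    set Ca := (Set.toFinite {γ : Γ | h γ = true}).toFinset.inf c with hCa
    set Cb := (Set.toFinite {γ : Γ | h γ = false}).toFinset.inf c with hCb
    -- m is finite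
    have hmtop : m ≠ ⊤ := by
      intro htop
      rw [htop] at e1
      simp [mulTime, top_add] at e1
    obtain ⟨μ, hμ⟩ := WithTop.ne_top_iff_exists.mp hmtop
    have hmul : ∀ t : ℝ≥0, mulTime m t = ((μ * (t : ℝ) : ℝ) : WithTop ℝ) := by
      intro t
      rw [← hμ]
      exact WithTop.map_coe _ _
    rw [hmul] at e1 e2 e3 e4
    have hCatop : Ca ≠ ⊤ := by
      intro htop
      rw [htop, add_top] at e1
      exact WithTop.coe_ne_top e1
    have hCbtop : Cb ≠ ⊤ := by
      intro htop
      rw [htop, add_top] at e3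
      exact WithTop.coe_ne_top e3
    obtain ⟨κa, hκa⟩ := WithTop.ne_top_iff_exists.mp hCatop
    obtain ⟨κb, hκb⟩ := WithTop.ne_top_iff_exists.mp hCbtop
    rw [← hκa] at e1 e2
    rw [← hκb] at e3 e4
    rw [← WithTop.coe_add, WithTop.coe_inj] at e1 e2 e3 e4
    have hts : (t₂ : ℝ) = (t₁ : ℝ) + 1 := by
      rw [ht₁def, ht₂def]
      push_cast
      ring
    have hdiff : μ * (t₂ : ℝ) = μ * (t₁ : ℝ) + μ := by rw [hts]; ring
    linarith
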